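/- arXiv:cs/0009024 — 4 statements merged into one kernel-verified Lean document; each statement's English description precedes it below -/
import Mathlib

section
/- For any finite set S of n points in R^d, there exists a point p ∈ R^d whose Tukey depth with respect to S is at least ⌈n/(d+1)⌉. -/
open RealInnerProductSpace

/-- Centerpoint theorem: for any finite set S of n points in ℝ^d there is a point p
whose Tukey depth is at least ⌈n/(d+1)⌉, i.e. every closed halfspace containing p
contains at least ⌈n/(d+1)⌉ points of S. -/
theorem stmt6 (d : ℕ) (S : Finset (EuclideanSpace ℝ (Fin d))) :
    ∃ p : EuclideanSpace ℝ (Fin d),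
      ∀ (v : EuclideanSpace ℝ (Fin d)) (c : ℝ), v ≠ 0 → c ≤ ⟪p, v⟫ →
        (⌈(S.card : ℚ) / (d + 1)⌉ : ℤ) ≤
          Set.ncard {s ∈ (S : Set (EuclideanSpace ℝ (Fin d))) | c ≤ ⟪s, v⟫} := by
  classical
  set n := S.card with hn
  set k : ℤ := ⌈(S.card : ℚ) / (d + 1)⌉ with hk
  have hdim : Module.finrank ℝ (EuclideanSpace ℝ (Fin d)) = d := finrank_euclideanSpace_fin
  -- key arithmetic inequality: (d+1)*(k-1) < n
  have hkey : ((d : ℤ) + 1) * (k - 1) < (n : ℤ) := by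
    have h1 : (k : ℚ) < (n : ℚ) / (d + 1) + 1 := Int.ceil_lt_add_one _
    have hd1 : (0 : ℚ) < (d : ℚ) + 1 := by positivity
    have h2 : ((d : ℚ) + 1) * ((k : ℚ) - 1) < (n : ℚ) := by
      have := (mul_lt_mul_of_pos_left (by linarith : (k : ℚ) - 1 < (n : ℚ) / (d + 1)) hd1)
      calc ((d : ℚ) + 1) * ((k : ℚ) - 1) < ((d : ℚ) + 1) * ((n : ℚ) / (d + 1)) := this
        _ = (n : ℚ) := by field_simp
    exact_mod_cast h2
  -- the family of convex hulls of large subsets of S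
  let s : Finset (Finset (EuclideanSpace ℝ (Fin d))) := S.powerset.filter fun T => (n : ℤ) < (T.card : ℤ) + k
  have hHelly : (⋂ T ∈ s, convexHull ℝ (T : Set (EuclideanSpace ℝ (Fin d)))).Nonempty := by
    apply Convex.helly_theorem' (𝕜 := ℝ)
    · intro T _; exact convex_convexHull ℝ _
    · intro I hIs hIcard
      rw [hdim] at hIcard
      rcases I.eq_empty_or_nonempty with rfl | ⟨T0, hT0⟩
      · simp
      have hmem : ∀ T ∈ I, T ⊆ S ∧ (n : ℤ) < (T.card : ℤ) + k := by
        intro T hT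
        have := hIs hT
        simp only [s, Finset.mem_filter, Finset.mem_powerset] at this
        exact this
      have hcompl : ∀ T ∈ I, (((S \ T).card : ℤ)) ≤ k - 1 := by
        intro T hT
        obtain ⟨hTS, hTc⟩ := hmem T hT
        have hcard : (S \ T).card = n - T.card := Finset.card_sdiff_of_subset hTS
        have hle : T.card ≤ n := Finset.card_le_card hTS
        have : ((S \ T).card : ℤ) = (n : ℤ) - (T.card : ℤ) := by
          rw [hcard]; push_cast [Nat.cast_sub hle]; ring
        omega
      have hk1 : (0 : ℤ) ≤ k - 1 := le_trans (by positivity) (hcompl T0 hT0)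
      -- the union of complements is small
      set J : Finset (EuclideanSpace ℝ (Fin d)) := I.sup (fun T => S \ T) with hJ
      have hJS : J ⊆ S := Finset.sup_le fun T _ => Finset.sdiff_subset
      have hJcard : (J.card : ℤ) < (n : ℤ) := by
        have h1 : J.card ≤ ∑ T ∈ I, (S \ T).card := by
          rw [hJ, Finset.sup_eq_biUnion]; exact Finset.card_biUnion_le
        have h2 : (∑ T ∈ I, ((S \ T).card : ℤ)) ≤ ∑ T ∈ I, (k - 1) :=
          Finset.sum_le_sum hcompl
        have h3 : (∑ T ∈ I, (k - 1)) = (I.card : ℤ) * (k - 1) := by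
          rw [Finset.sum_const, nsmul_eq_mul]
        have h4 : (I.card : ℤ) * (k - 1) ≤ ((d : ℤ) + 1) * (k - 1) := by
          apply mul_le_mul_of_nonneg_right _ hk1
          exact_mod_cast hIcard
        have h5 : (J.card : ℤ) ≤ ∑ T ∈ I, ((S \ T).card : ℤ) := by
          exact_mod_cast h1
        push_cast at h5 ⊢
        omega
      have hx : ∃ x ∈ S, x ∉ J := by
        by_contra h
        push_neg at h
        have : S ⊆ J := h
        have := Finset.card_le_card this
        omega
      obtain ⟨x, hxS, hxJ⟩ := hx
      refine ⟨x, Set.mem_biInter ?_⟩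
      intro T hT
      apply subset_convexHull
      simp only [Finset.mem_coe]
      by_contra hxT
      exact hxJ (Finset.le_sup (f := fun T => S \ T) hT (Finset.mem_sdiff.mpr ⟨hxS, hxT⟩))
  obtain ⟨p, hp⟩ := hHelly
  refine ⟨p, fun v c _ hc => ?_⟩
  have hsetA : {x ∈ (S : Set (EuclideanSpace ℝ (Fin d))) | c ≤ ⟪x, v⟫}
      = ↑(S.filter fun x => c ≤ ⟪x, v⟫) := by
    ext x
    simp only [Finset.coe_filter, Set.mem_setOf_eq, Finset.mem_coe]
  rw [hsetA, Set.ncard_coe_finset]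
  by_contra hlt
  push_neg at hlt
  set A := S.filter fun x => c ≤ ⟪x, v⟫ with hA
  set B := S.filter fun x => ¬ c ≤ ⟪x, v⟫ with hB
  have hAB : A.card + B.card = n := Finset.card_filter_add_card_filter_not _
  have hBs : B ∈ s := by
    simp only [s, Finset.mem_filter, Finset.mem_powerset]
    refine ⟨Finset.filter_subset _ _, ?_⟩
    omega
  have hpB : p ∈ convexHull ℝ (B : Set (EuclideanSpace ℝ (Fin d))) := by
    have := Set.mem_iInter₂.mp hp B hBs
    exact this
  have hhalf : convexHull ℝ (B : Set (EuclideanSpace ℝ (Fin d))) ⊆ {x : EuclideanSpace ℝ (Fin d) | ⟪x, v⟫ < c} := by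
    apply convexHull_min
    · intro x hxB
      simp only [hB, Finset.coe_filter, Set.mem_setOf_eq, not_le] at hxB
      exact hxB.2
    · exact convex_halfSpace_lt
        ⟨fun x y => inner_add_left x y v, fun r x => real_inner_smul_left x v r⟩ c
  exact absurd hc (not_le.mpr (hhalf hpB))
end

section
/- Let S be a finite set of n points in R^2 in general position (no two sharing an x-coordinate). Then there exists a non-vertical line L such that for every vertical line V and every double wedge W bounded by L and V, the number of points of S contained in W is at least ⌈n/3⌉. -/
open Finset
open scoped Classical

noncomputable section CatlineAux

abbrev Pt := EuclideanSpace ℝ (Fin 2)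

/-- residual (without intercept) -/
def rsd (t : ℝ) (p : Pt) : ℝ := p 1 - t * p 0

lemma ceil_third (n : ℕ) : (⌈(n : ℚ) / 3⌉ : ℤ) = ((n + 2) / 3 : ℕ) := by
  set K := (n + 2) / 3 with hK
  have h1 : 3 * K ≤ n + 2 := by omega
  have h2 : n ≤ 3 * K := by omega
  have hq1 : (3 : ℚ) * K ≤ n + 2 := by exact_mod_cast h1
  have hq2 : (n : ℚ) ≤ 3 * K := by exact_mod_cast h2
  rw [Int.ceil_eq_iff]
  constructor
  · push_cast
    rw [lt_div_iff₀ (by norm_num : (0:ℚ) < 3)]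
    linarith
  · push_cast
    rw [div_le_iff₀ (by norm_num : (0:ℚ) < 3)]
    linarith

lemma exists_min_x (F : Finset Pt) (h : F.Nonempty) : ∃ p ∈ F, ∀ q ∈ F, p 0 ≤ q 0 := by
  obtain ⟨p, hp, hmin⟩ := F.exists_min_image (fun p => p 0) h
  exact ⟨p, hp, hmin⟩

lemma exists_prefix (S : Finset Pt) (hx : ∀ p ∈ S, ∀ q ∈ S, p ≠ q → p 0 ≠ q 0)
    (c : ℕ) (hc : c ≤ S.card) :
    ∃ A ⊆ S, A.card = c ∧ ∀ p ∈ A, ∀ q ∈ S, q ∉ A → p 0 < q 0 := by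
  induction c with
  | zero => exact ⟨∅, empty_subset _, rfl, by simp⟩
  | succ c ih =>
    obtain ⟨A, hAS, hcard, horder⟩ := ih (by omega)
    have hne : (S \ A).Nonempty := by
      rw [← Finset.card_pos, card_sdiff_of_subset hAS]
      omega
    obtain ⟨q₀, hq₀, hmin⟩ := exists_min_x _ hne
    rw [mem_sdiff] at hq₀
    refine ⟨insert q₀ A, ?_, ?_, ?_⟩
    · exact insert_subset hq₀.1 hAS
    · rw [card_insert_of_notMem hq₀.2, hcard]
    · intro p hp q hq hq'
      rcases mem_insert.1 hp with rfl | hp'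
      · have hqA : q ∉ A := fun h => hq' (mem_insert_of_mem h)
        have hle : p 0 ≤ q 0 := hmin q (mem_sdiff.2 ⟨hq, hqA⟩)
        have hne2 : p 0 ≠ q 0 := hx p hq₀.1 q hq (fun h => hq' (h ▸ mem_insert_self _ _))
        exact lt_of_le_of_ne hle hne2
      · exact horder p hp' q hq (fun h => hq' (mem_insert_of_mem h))

/-- Carve S into three x-ordered blocks of prescribed sizes. -/
lemma exists_carve (S : Finset Pt) (hx : ∀ p ∈ S, ∀ q ∈ S, p ≠ q → p 0 ≠ q 0)
    (α μ β : ℕ) (hsum : α + μ + β = S.card) :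
    ∃ A M B : Finset Pt, A ⊆ S ∧ M ⊆ S ∧ B ⊆ S ∧
      Disjoint A M ∧ Disjoint M B ∧ Disjoint A B ∧
      A.card = α ∧ M.card = μ ∧ B.card = β ∧
      (∀ p ∈ A, ∀ q ∈ M, p 0 < q 0) ∧
      (∀ p ∈ M, ∀ q ∈ B, p 0 < q 0) ∧
      (∀ p ∈ A, ∀ q ∈ B, p 0 < q 0) := by
  obtain ⟨A, hAS, hAcard, hAord⟩ := exists_prefix S hx α (by omega)
  set S' := S \ A with hS'
  have hS'card : S'.card = μ + β := by rw [hS', card_sdiff_of_subset hAS]; omega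
  have hx' : ∀ p ∈ S', ∀ q ∈ S', p ≠ q → p 0 ≠ q 0 := fun p hp q hq =>
    hx p (sdiff_subset hp) q (sdiff_subset hq)
  obtain ⟨M, hMS', hMcard, hMord⟩ := exists_prefix S' hx' μ (by omega)
  have hdAS' : Disjoint A S' := disjoint_sdiff
  refine ⟨A, M, S' \ M, hAS, hMS'.trans sdiff_subset, (sdiff_subset).trans sdiff_subset,
    hdAS'.mono_right hMS', disjoint_sdiff, hdAS'.mono_right sdiff_subset,
    hAcard, hMcard, ?_, ?_, ?_, ?_⟩
  · rw [card_sdiff_of_subset hMS', hS'card, hMcard]; omega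
  · intro p hp q hq
    have hq' : q ∈ S' := hMS' hq
    exact hAord p hp q (sdiff_subset hq') (mem_sdiff.1 hq').2
  · intro p hp q hq
    exact hMord p hp q (mem_sdiff.1 hq).1 (mem_sdiff.1 hq).2
  · intro p hp q hq
    have hq' : q ∈ S' := sdiff_subset hq
    exact hAord p hp q (sdiff_subset hq') (mem_sdiff.1 hq').2


/-! ### Order statistics of residuals -/

/-- candidate values for the m-th smallest residual -/
def cand (F : Finset Pt) (m : ℕ) (t : ℝ) : Finset ℝ :=
  (F.image (rsd t)).filter fun v => m ≤ (F.filter fun p => rsd t p ≤ v).card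

noncomputable def ostat (F : Finset Pt) (m : ℕ) (t : ℝ) : ℝ :=
  if h : (cand F m t).Nonempty then (cand F m t).min' h else 0

section Ostat

variable {F : Finset Pt} {m : ℕ} {t : ℝ}

lemma cand_nonempty (hF : F.Nonempty) (hm : m ≤ F.card) : (cand F m t).Nonempty := by
  refine ⟨(F.image (rsd t)).max' (hF.image _), mem_filter.2 ⟨Finset.max'_mem _ _, ?_⟩⟩
  have : F.filter (fun p => rsd t p ≤ (F.image (rsd t)).max' (hF.image _)) = F := by
    apply filter_true_of_mem
    intro p hp
    exact Finset.le_max' _ _ (mem_image_of_mem _ hp)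
  rw [this]; exact hm

lemma ostat_mem (hF : F.Nonempty) (hm : m ≤ F.card) : ostat F m t ∈ cand F m t := by
  rw [ostat, dif_pos (cand_nonempty hF hm)]
  exact Finset.min'_mem _ _

lemma ostat_count (hF : F.Nonempty) (hm : m ≤ F.card) :
    m ≤ (F.filter fun p => rsd t p ≤ ostat F m t).card :=
  (mem_filter.1 (ostat_mem hF hm)).2

lemma ostat_min'_le (hF : F.Nonempty) (hm : m ≤ F.card) {v : ℝ} (hv : v ∈ cand F m t) :
    ostat F m t ≤ v := by
  rw [ostat, dif_pos (cand_nonempty hF hm)]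
  exact Finset.min'_le _ _ hv

lemma ostat_le_of (hF : F.Nonempty) (hm : m ≤ F.card) (hm1 : 1 ≤ m) {v : ℝ}
    (h : m ≤ (F.filter fun p => rsd t p ≤ v).card) : ostat F m t ≤ v := by
  set W := F.filter fun p => rsd t p ≤ v with hW
  have hWne : W.Nonempty := Finset.card_pos.1 (by omega)
  set v' := (W.image (rsd t)).max' (hWne.image _) with hv'
  obtain ⟨p₀, hp₀, hp₀e⟩ := mem_image.1 (Finset.max'_mem (W.image (rsd t)) (hWne.image _))
  have hv'le : v' ≤ v := by
    rw [hv', ← hp₀e]; exact (mem_filter.1 hp₀).2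
  have hWsub : W ⊆ F.filter fun p => rsd t p ≤ v' := by
    intro p hp
    exact mem_filter.2 ⟨(mem_filter.1 hp).1, Finset.le_max' _ _ (mem_image_of_mem _ hp)⟩
  have hv'cand : v' ∈ cand F m t := by
    refine mem_filter.2 ⟨?_, le_trans h (card_le_card hWsub)⟩
    rw [hv', ← hp₀e]
    exact mem_image_of_mem _ (filter_subset _ _ hp₀)
  exact le_trans (ostat_min'_le hF hm hv'cand) hv'le

lemma ostat_lt_count (hF : F.Nonempty) (hm : m ≤ F.card) (hm1 : 1 ≤ m) :
    (F.filter fun p => rsd t p < ostat F m t).card < m := by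
  by_contra hcon
  push_neg at hcon
  set W := F.filter fun p => rsd t p < ostat F m t with hW
  have hWne : W.Nonempty := Finset.card_pos.1 (by omega)
  set v' := (W.image (rsd t)).max' (hWne.image _) with hv'
  obtain ⟨p₀, hp₀, hp₀e⟩ := mem_image.1 (Finset.max'_mem (W.image (rsd t)) (hWne.image _))
  have hv'lt : v' < ostat F m t := by rw [hv', ← hp₀e]; exact (mem_filter.1 hp₀).2
  have hWsub : W ⊆ F.filter fun p => rsd t p ≤ v' := by
    intro p hp
    exact mem_filter.2 ⟨(mem_filter.1 hp).1, Finset.le_max' _ _ (mem_image_of_mem _ hp)⟩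
  have hv'cand : v' ∈ cand F m t := by
    refine mem_filter.2 ⟨?_, le_trans hcon (card_le_card hWsub)⟩
    rw [hv', ← hp₀e]
    exact mem_image_of_mem _ (filter_subset _ _ hp₀)
  exact absurd (ostat_min'_le hF hm hv'cand) (not_le.2 hv'lt)

lemma ostat_ge_of (hF : F.Nonempty) (hm : m ≤ F.card) {v : ℝ}
    (h : (F.filter fun p => rsd t p < v).card < m) : v ≤ ostat F m t := by
  by_contra hcon
  push_neg at hcon
  have hsub : (F.filter fun p => rsd t p ≤ ostat F m t) ⊆ F.filter fun p => rsd t p < v :=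
    fun p hp => mem_filter.2 ⟨(mem_filter.1 hp).1, lt_of_le_of_lt (mem_filter.1 hp).2 hcon⟩
  exact absurd (le_trans (ostat_count hF hm) (card_le_card hsub)) (by omega)

lemma ostat_lip (hF : F.Nonempty) (hm : m ≤ F.card) (hm1 : 1 ≤ m) {K : ℝ}
    (hK : ∀ p ∈ F, |p 0| ≤ K) (t t' : ℝ) :
    ostat F m t' ≤ ostat F m t + K * |t' - t| := by
  apply ostat_le_of hF hm hm1
  refine le_trans (ostat_count hF hm (t := t)) (card_le_card ?_)
  intro p hp
  obtain ⟨hpF, hple⟩ := mem_filter.1 hp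
  refine mem_filter.2 ⟨hpF, ?_⟩
  have : rsd t' p - rsd t p = (t - t') * p 0 := by simp [rsd]; ring
  have hb : (t - t') * p 0 ≤ K * |t' - t| := by
    calc (t - t') * p 0 ≤ |(t - t') * p 0| := le_abs_self _
    _ = |t - t'| * |p 0| := abs_mul _ _
    _ ≤ |t - t'| * K := by
        apply mul_le_mul_of_nonneg_left (hK p hpF) (abs_nonneg _)
    _ = K * |t' - t| := by rw [abs_sub_comm]; ring
  linarith

lemma ostat_cont (hF : F.Nonempty) (hm : m ≤ F.card) (hm1 : 1 ≤ m) {K : ℝ}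
    (hK : ∀ p ∈ F, |p 0| ≤ K) : Continuous (fun t => ostat F m t) := by
  have hK0 : 0 ≤ K := le_trans (abs_nonneg _) (hK _ hF.choose_spec)
  apply LipschitzWith.continuous (K := Real.toNNReal K)
  apply LipschitzWith.of_dist_le_mul
  intro t t'
  rw [Real.dist_eq, Real.dist_eq, Real.coe_toNNReal _ hK0]
  rw [abs_sub_le_iff]
  have habs : |t - t'| = |t' - t| := abs_sub_comm _ _
  have h1 := ostat_lip hF hm hm1 hK t' t
  have h2 := ostat_lip hF hm hm1 hK t t'
  rw [← habs] at h2
  constructor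
  · linarith
  · linarith

end Ostat


lemma exists_max_x (F : Finset Pt) (h : F.Nonempty) : ∃ p ∈ F, ∀ q ∈ F, q 0 ≤ p 0 := by
  obtain ⟨p, hp, hmax⟩ := F.exists_max_image (fun p => p 0) h
  exact ⟨p, hp, hmax⟩

set_option maxHeartbeats 1000000 in
lemma exists_good_line (S : Finset Pt) (hx : ∀ p ∈ S, ∀ q ∈ S, p ≠ q → p 0 ≠ q 0)
    (h4 : 4 ≤ S.card) :
    ∃ a b : ℝ, ∀ x₀ : ℝ,
      (S.card + 2) / 3 ≤ (S.filter fun p => 0 ≤ (p 1 - (a * p 0 + b)) * (p 0 - x₀)).card ∧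
      (S.card + 2) / 3 ≤ (S.filter fun p => (p 1 - (a * p 0 + b)) * (p 0 - x₀) ≤ 0).card := by
  set n := S.card with hn
  set k := (n + 2) / 3 with hk
  set α := (n - k) / 2 with hα
  set β := n - k - α with hβ
  have hk2 : 2 ≤ k := by omega
  have hαk : k ≤ α + 1 := by omega
  have hβk : k ≤ β + 1 := by omega
  have hα1 : 1 ≤ α := by omega
  have hsum : α + k + β = n := by omega
  obtain ⟨A, M, B, hAS, hMS, hBS, hdAM, hdMB, hdAB, hcA, hcM, hcB, hoAM, hoMB, hoAB⟩ :=
    exists_carve S hx α k β hsum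
  set X := A ∪ M with hX
  set Y := M ∪ B with hY
  have hXS : X ⊆ S := union_subset hAS hMS
  have hYS : Y ⊆ S := union_subset hMS hBS
  have hcX : X.card = α + k := by rw [hX, card_union_of_disjoint hdAM, hcA, hcM]
  have hcY : Y.card = k + β := by rw [hY, card_union_of_disjoint hdMB, hcM, hcB]
  have hXne : X.Nonempty := by rw [← Finset.card_pos, hcX]; omega
  have hYne : Y.Nonempty := by rw [← Finset.card_pos, hcY]; omega
  have hkX : k ≤ X.card := by omega
  have hkY : k ≤ Y.card := by omega
  have hk1 : 1 ≤ k := by omega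
  have hMne : M.Nonempty := by rw [← Finset.card_pos, hcM]; omega
  obtain ⟨mlo, hmlo, hmloMin⟩ := exists_min_x M hMne
  obtain ⟨mhi, hmhi, hmhiMax⟩ := exists_max_x M hMne
  have hlohi : mlo 0 < mhi 0 := by
    obtain ⟨p, hp, q, hq, hpq⟩ := Finset.one_lt_card.1 (by omega : 1 < M.card)
    have hxpq : p 0 ≠ q 0 := hx p (hMS hp) q (hMS hq) hpq
    rcases lt_or_gt_of_ne hxpq with h | h
    · exact lt_of_le_of_lt (hmloMin p hp) (lt_of_lt_of_le h (hmhiMax q hq))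
    · exact lt_of_le_of_lt (hmloMin q hq) (lt_of_lt_of_le h (hmhiMax p hp))
  have hSne : S.Nonempty := by rw [← Finset.card_pos]; omega
  obtain ⟨C, hCb'⟩ := Finset.exists_le (S.image fun p => |p 1|)
  have hCb : ∀ p ∈ S, |p 1| ≤ C := fun p hp => hCb' _ (mem_image_of_mem _ hp)
  have hC0 : 0 ≤ C := le_trans (abs_nonneg _) (hCb _ hSne.choose_spec)
  obtain ⟨K, hKb'⟩ := Finset.exists_le (S.image fun p => |p 0|)
  have hKb : ∀ p ∈ S, |p 0| ≤ K := fun p hp => hKb' _ (mem_image_of_mem _ hp)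
  -- the four structural counting facts
  have c1 : (X.filter fun p => mlo 0 < p 0).card < k := by
    have hXf : X.filter (fun p => mlo 0 < p 0) = A.filter (fun p => mlo 0 < p 0) ∪
        M.filter (fun p => mlo 0 < p 0) := by rw [hX, filter_union]
    have hA0 : A.filter (fun p => mlo 0 < p 0) = ∅ := by
      apply filter_false_of_mem
      intro p hp
      exact not_lt.2 (le_of_lt (hoAM p hp mlo hmlo))
    have hMsub : M.filter (fun p => mlo 0 < p 0) ⊆ M.erase mlo := by
      intro p hp
      obtain ⟨hpM, hplt⟩ := mem_filter.1 hp
      exact mem_erase.2 ⟨fun h => absurd hplt (by rw [h]; exact lt_irrefl _), hpM⟩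
    have h1 : (X.filter fun p => mlo 0 < p 0).card ≤ (M.erase mlo).card := by
      rw [hXf, hA0, empty_union]
      exact card_le_card hMsub
    have h3 : (M.erase mlo).card < k := hcM ▸ card_erase_lt_of_mem hmlo
    exact lt_of_le_of_lt h1 h3
  have c2 : k ≤ (X.filter fun p => p 0 ≤ mlo 0).card := by
    have hsub : insert mlo A ⊆ X.filter (fun p => p 0 ≤ mlo 0) := by
      intro p hp
      rcases mem_insert.1 hp with rfl | hpA
      · exact mem_filter.2 ⟨mem_union_right _ hmlo, le_refl _⟩
      · exact mem_filter.2 ⟨mem_union_left _ hpA, le_of_lt (hoAM p hpA mlo hmlo)⟩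
    have hmloA : mlo ∉ A := fun h => absurd (hoAM mlo h mlo hmlo) (lt_irrefl _)
    calc k ≤ α + 1 := hαk
      _ = (insert mlo A).card := by rw [card_insert_of_notMem hmloA, hcA]
      _ ≤ _ := card_le_card hsub
  have c3 : (Y.filter fun p => p 0 < mhi 0).card < k := by
    have hYf : Y.filter (fun p => p 0 < mhi 0) = M.filter (fun p => p 0 < mhi 0) ∪
        B.filter (fun p => p 0 < mhi 0) := by rw [hY, filter_union]
    have hB0 : B.filter (fun p => p 0 < mhi 0) = ∅ := by
      apply filter_false_of_mem
      intro p hp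
      exact not_lt.2 (le_of_lt (hoMB mhi hmhi p hp))
    have hMsub : M.filter (fun p => p 0 < mhi 0) ⊆ M.erase mhi := by
      intro p hp
      obtain ⟨hpM, hplt⟩ := mem_filter.1 hp
      exact mem_erase.2 ⟨fun h => absurd hplt (by rw [h]; exact lt_irrefl _), hpM⟩
    have h1 : (Y.filter fun p => p 0 < mhi 0).card ≤ (M.erase mhi).card := by
      rw [hYf, hB0, union_empty]
      exact card_le_card hMsub
    have h3 : (M.erase mhi).card < k := hcM ▸ card_erase_lt_of_mem hmhi
    exact lt_of_le_of_lt h1 h3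
  have c4 : k ≤ (Y.filter fun p => mhi 0 ≤ p 0).card := by
    have hsub : insert mhi B ⊆ Y.filter (fun p => mhi 0 ≤ p 0) := by
      intro p hp
      rcases mem_insert.1 hp with rfl | hpB
      · exact mem_filter.2 ⟨mem_union_left _ hmhi, le_refl _⟩
      · exact mem_filter.2 ⟨mem_union_right _ hpB, le_of_lt (hoMB mhi hmhi p hpB)⟩
    have hmhiB : mhi ∉ B := fun h => absurd (hoMB mhi hmhi mhi h) (lt_irrefl _)
    calc k ≤ β + 1 := hβk
      _ = (insert mhi B).card := by rw [card_insert_of_notMem hmhiB, hcB]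
      _ ≤ _ := card_le_card hsub
  -- IVT on the slope
  have hden : 0 < mhi 0 - mlo 0 := by linarith
  obtain ⟨t₁, ht₁pos, ht₁mul⟩ : ∃ t₁ : ℝ, 0 < t₁ ∧ t₁ * (mhi 0 - mlo 0) = 2 * C + 1 :=
    ⟨(2 * C + 1) / (mhi 0 - mlo 0), div_pos (by linarith) hden,
      div_mul_cancel₀ _ (ne_of_gt hden)⟩
  have hGpos : 0 < ostat X k t₁ - ostat Y k t₁ := by
    have hlow : -t₁ * mlo 0 - C ≤ ostat X k t₁ := by
      apply ostat_ge_of hXne hkX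
      refine lt_of_le_of_lt (card_le_card ?_) c1
      intro p hp
      obtain ⟨hpX, hplt⟩ := mem_filter.1 hp
      refine mem_filter.2 ⟨hpX, ?_⟩
      have hpy : -C ≤ p 1 := neg_le_of_abs_le (hCb p (hXS hpX))
      rw [rsd] at hplt
      nlinarith
    have hup : ostat Y k t₁ ≤ -t₁ * mhi 0 + C := by
      apply ostat_le_of hYne hkY hk1
      refine le_trans c4 (card_le_card ?_)
      intro p hp
      obtain ⟨hpY, hple⟩ := mem_filter.1 hp
      refine mem_filter.2 ⟨hpY, ?_⟩
      have hpy : p 1 ≤ C := le_of_abs_le (hCb p (hYS hpY))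
      rw [rsd]
      nlinarith
    linarith [ht₁mul, mul_sub t₁ (mhi 0) (mlo 0)]
  have hGneg : ostat X k (-t₁) - ostat Y k (-t₁) < 0 := by
    have hup : ostat X k (-t₁) ≤ t₁ * mlo 0 + C := by
      apply ostat_le_of hXne hkX hk1
      refine le_trans c2 (card_le_card ?_)
      intro p hp
      obtain ⟨hpX, hple⟩ := mem_filter.1 hp
      refine mem_filter.2 ⟨hpX, ?_⟩
      have hpy : p 1 ≤ C := le_of_abs_le (hCb p (hXS hpX))
      rw [rsd]
      nlinarith
    have hlow : t₁ * mhi 0 - C ≤ ostat Y k (-t₁) := by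
      apply ostat_ge_of hYne hkY
      refine lt_of_le_of_lt (card_le_card ?_) c3
      intro p hp
      obtain ⟨hpY, hplt⟩ := mem_filter.1 hp
      refine mem_filter.2 ⟨hpY, ?_⟩
      have hpy : -C ≤ p 1 := neg_le_of_abs_le (hCb p (hYS hpY))
      rw [rsd] at hplt
      nlinarith
    linarith [ht₁mul, mul_sub t₁ (mhi 0) (mlo 0)]
  have hcont : Continuous (fun t => ostat X k t - ostat Y k t) :=
    (ostat_cont hXne hkX hk1 (fun p hp => hKb p (hXS hp))).sub
      (ostat_cont hYne hkY hk1 (fun p hp => hKb p (hYS hp)))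
  have ht₀₁ : -t₁ ≤ t₁ := by linarith
  obtain ⟨t, _, hroot⟩ := intermediate_value_Icc ht₀₁ hcont.continuousOn
    ⟨le_of_lt hGneg, le_of_lt hGpos⟩
  have hwY : ostat Y k t = ostat X k t := by
    simp only at hroot
    linarith [hroot]
  obtain ⟨w, hwdef⟩ : ∃ w, ostat X k t = w := ⟨_, rfl⟩
  have hP1X : k ≤ (X.filter fun p => rsd t p ≤ w).card := by
    rw [← hwdef]; exact ostat_count hXne hkX
  have hP2X : (X.filter fun p => rsd t p < w).card < k := by
    rw [← hwdef]; exact ostat_lt_count hXne hkX hk1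
  have hP1Y : k ≤ (Y.filter fun p => rsd t p ≤ w).card := by
    rw [← hwdef, ← hwY]; exact ostat_count hYne hkY
  have hP2Y : (Y.filter fun p => rsd t p < w).card < k := by
    rw [← hwdef, ← hwY]; exact ostat_lt_count hYne hkY hk1
  -- sign products helpers
  have mulpos : ∀ u v : ℝ, u ≤ 0 → v ≤ 0 → 0 ≤ u * v := fun u v hu hv => by nlinarith
  have mulneg1 : ∀ u v : ℝ, u ≤ 0 → 0 ≤ v → u * v ≤ 0 := fun u v hu hv => by nlinarith
  have mulneg2 : ∀ u v : ℝ, 0 ≤ u → v ≤ 0 → u * v ≤ 0 := fun u v hu hv => by nlinarith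
  -- partition counts within M
  have hMsplit1 : (M.filter fun p => rsd t p ≤ w).card
      + (M.filter fun p => w < rsd t p).card = k := by
    have key := card_filter_add_card_filter_not (s := M) (p := fun p => rsd t p ≤ w)
    rw [hcM] at key
    rw [show (M.filter fun p => ¬ rsd t p ≤ w) = M.filter fun p => w < rsd t p from
      filter_congr fun p _ => by rw [not_le]] at key
    exact key
  have hMsplit2 : (M.filter fun p => w ≤ rsd t p).card
      + (M.filter fun p => rsd t p < w).card = k := by
    have key := card_filter_add_card_filter_not (s := M) (p := fun p => w ≤ rsd t p)
    rw [hcM] at key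
    rw [show (M.filter fun p => ¬ w ≤ rsd t p) = M.filter fun p => rsd t p < w from
      filter_congr fun p _ => by rw [not_le]] at key
    exact key
  have hMeq1 : (M.filter fun p => rsd t p ≤ w).card
      = (M.filter fun p => rsd t p < w).card + (M.filter fun p => rsd t p = w).card := by
    rw [← card_union_of_disjoint (by
      rw [disjoint_left]
      intro p hp hq
      exact absurd (mem_filter.1 hq).2 (ne_of_lt (mem_filter.1 hp).2))]
    congr 1
    ext p
    simp only [mem_filter, mem_union]
    constructor
    · rintro ⟨hpM, hle⟩
      rcases lt_or_eq_of_le hle with h | h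
      · exact Or.inl ⟨hpM, h⟩
      · exact Or.inr ⟨hpM, h⟩
    · rintro (⟨hpM, h⟩ | ⟨hpM, h⟩)
      · exact ⟨hpM, le_of_lt h⟩
      · exact ⟨hpM, le_of_eq h⟩
  have hMeq2 : (M.filter fun p => w ≤ rsd t p).card
      = (M.filter fun p => rsd t p = w).card + (M.filter fun p => w < rsd t p).card := by
    rw [← card_union_of_disjoint (by
      rw [disjoint_left]
      intro p hp hq
      exact absurd (mem_filter.1 hp).2 (ne_of_gt (mem_filter.1 hq).2))]
    congr 1
    ext p
    simp only [mem_filter, mem_union]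
    constructor
    · rintro ⟨hpM, hle⟩
      rcases eq_or_lt_of_le hle with h | h
      · exact Or.inl ⟨hpM, h.symm⟩
      · exact Or.inr ⟨hpM, h⟩
    · rintro (⟨hpM, h⟩ | ⟨hpM, h⟩)
      · exact ⟨hpM, le_of_eq h.symm⟩
      · exact ⟨hpM, le_of_lt h⟩
  -- splits of X and Y
  have hsplitX : ∀ P : Pt → Prop, ((A ∪ M).filter fun p => P p).card
      = (A.filter fun p => P p).card + (M.filter fun p => P p).card := by
    intro P
    rw [filter_union,
      card_union_of_disjoint (hdAM.mono (filter_subset _ _) (filter_subset _ _))]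
  have hsplitY : ∀ P : Pt → Prop, ((M ∪ B).filter fun p => P p).card
      = (M.filter fun p => P p).card + (B.filter fun p => P p).card := by
    intro P
    rw [filter_union,
      card_union_of_disjoint (hdMB.mono (filter_subset _ _) (filter_subset _ _))]
  -- complement counts on X and Y
  have hXcompl : (X.filter fun p => w ≤ rsd t p).card
      + (X.filter fun p => rsd t p < w).card = α + k := by
    have key := card_filter_add_card_filter_not (s := X) (p := fun p => w ≤ rsd t p)
    rw [hcX] at key
    rw [show (X.filter fun p => ¬ w ≤ rsd t p) = X.filter fun p => rsd t p < w from
      filter_congr fun p _ => by rw [not_le]] at key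
    exact key
  have hYcompl : (Y.filter fun p => w ≤ rsd t p).card
      + (Y.filter fun p => rsd t p < w).card = k + β := by
    have key := card_filter_add_card_filter_not (s := Y) (p := fun p => w ≤ rsd t p)
    rw [hcY] at key
    rw [show (Y.filter fun p => ¬ w ≤ rsd t p) = Y.filter fun p => rsd t p < w from
      filter_congr fun p _ => by rw [not_le]] at key
    exact key
  -- the four pool bounds
  have uA : (M.filter fun p => w < rsd t p).card ≤ (A.filter fun p => rsd t p ≤ w).card := by
    have h1 := hsplitX (fun p => rsd t p ≤ w)
    rw [← hX] at h1
    linarith [hP1X, hMsplit1]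
  have dA : (M.filter fun p => rsd t p < w).card ≤ (A.filter fun p => w ≤ rsd t p).card := by
    have h1 := hsplitX (fun p => w ≤ rsd t p)
    rw [← hX] at h1
    linarith [hP2X, hMsplit2, hXcompl, hαk]
  have uB : (M.filter fun p => w < rsd t p).card ≤ (B.filter fun p => rsd t p ≤ w).card := by
    have h1 := hsplitY (fun p => rsd t p ≤ w)
    rw [← hY] at h1
    linarith [hP1Y, hMsplit1]
  have dB : (M.filter fun p => rsd t p < w).card ≤ (B.filter fun p => w ≤ rsd t p).card := by
    have h1 := hsplitY (fun p => w ≤ rsd t p)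
    rw [← hY] at h1
    linarith [hP2Y, hMsplit2, hYcompl, hβk]
  -- conclusion
  have hres : ∀ p : Pt, p 1 - (t * p 0 + w) = rsd t p - w := fun p => by
    simp only [rsd]; ring
  refine ⟨t, w, fun x₀ => ⟨?_, ?_⟩⟩
  · -- wedge⁺ : 0 ≤ res * (x - x₀)
    by_cases hca : ∀ m' ∈ M, x₀ ≤ m' 0
    · have hsub : (M.filter fun p => w ≤ rsd t p) ∪ (B.filter fun p => w ≤ rsd t p)
          ⊆ S.filter fun p => 0 ≤ (p 1 - (t * p 0 + w)) * (p 0 - x₀) := by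
        intro p hp
        rcases mem_union.1 hp with hp | hp <;> obtain ⟨hpm, hpr⟩ := mem_filter.1 hp
        · refine mem_filter.2 ⟨hMS hpm, ?_⟩
          have f1 : 0 ≤ p 1 - (t * p 0 + w) := by rw [hres p]; linarith
          have f2 : 0 ≤ p 0 - x₀ := by linarith [hca p hpm]
          exact mul_nonneg f1 f2
        · refine mem_filter.2 ⟨hBS hpm, ?_⟩
          have f1 : 0 ≤ p 1 - (t * p 0 + w) := by rw [hres p]; linarith
          have f2 : 0 ≤ p 0 - x₀ := by linarith [hca mlo hmlo, hoMB mlo hmlo p hpm]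
          exact mul_nonneg f1 f2
      calc k ≤ (M.filter fun p => w ≤ rsd t p).card
            + (B.filter fun p => w ≤ rsd t p).card := by linarith [hMsplit2, dB]
        _ = ((M.filter fun p => w ≤ rsd t p) ∪ (B.filter fun p => w ≤ rsd t p)).card :=
            (card_union_of_disjoint (hdMB.mono (filter_subset _ _) (filter_subset _ _))).symm
        _ ≤ _ := card_le_card hsub
    · by_cases hcb : ∀ m' ∈ M, m' 0 ≤ x₀
      · have hsub : (A.filter fun p => rsd t p ≤ w) ∪ (M.filter fun p => rsd t p ≤ w)
            ⊆ S.filter fun p => 0 ≤ (p 1 - (t * p 0 + w)) * (p 0 - x₀) := by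
          intro p hp
          rcases mem_union.1 hp with hp | hp <;> obtain ⟨hpm, hpr⟩ := mem_filter.1 hp
          · refine mem_filter.2 ⟨hAS hpm, ?_⟩
            have f1 : p 1 - (t * p 0 + w) ≤ 0 := by rw [hres p]; linarith
            have f2 : p 0 - x₀ ≤ 0 := by
              linarith [hoAM p hpm mlo hmlo, hcb mlo hmlo]
            exact mulpos _ _ f1 f2
          · refine mem_filter.2 ⟨hMS hpm, ?_⟩
            have f1 : p 1 - (t * p 0 + w) ≤ 0 := by rw [hres p]; linarith
            have f2 : p 0 - x₀ ≤ 0 := by linarith [hcb p hpm]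
            exact mulpos _ _ f1 f2
        calc k ≤ (A.filter fun p => rsd t p ≤ w).card
              + (M.filter fun p => rsd t p ≤ w).card := by linarith [hMsplit1, uA]
          _ = ((A.filter fun p => rsd t p ≤ w) ∪ (M.filter fun p => rsd t p ≤ w)).card :=
              (card_union_of_disjoint (hdAM.mono (filter_subset _ _) (filter_subset _ _))).symm
          _ ≤ _ := card_le_card hsub
      · push_neg at hca hcb
        obtain ⟨m₁, hm₁M, hm₁⟩ := hca
        obtain ⟨m₂, hm₂M, hm₂⟩ := hcb
        have hsub : (A.filter fun p => rsd t p ≤ w) ∪ ((M.filter fun p => rsd t p = w)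
            ∪ (B.filter fun p => w ≤ rsd t p))
            ⊆ S.filter fun p => 0 ≤ (p 1 - (t * p 0 + w)) * (p 0 - x₀) := by
          intro p hp
          rcases mem_union.1 hp with hp | hp
          · obtain ⟨hpm, hpr⟩ := mem_filter.1 hp
            refine mem_filter.2 ⟨hAS hpm, ?_⟩
            have f1 : p 1 - (t * p 0 + w) ≤ 0 := by rw [hres p]; linarith
            have f2 : p 0 - x₀ ≤ 0 := by linarith [hoAM p hpm m₁ hm₁M]
            exact mulpos _ _ f1 f2
          rcases mem_union.1 hp with hp | hp <;> obtain ⟨hpm, hpr⟩ := mem_filter.1 hp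
          · refine mem_filter.2 ⟨hMS hpm, ?_⟩
            have f1 : p 1 - (t * p 0 + w) = 0 := by rw [hres p]; linarith
            rw [f1, zero_mul]
          · refine mem_filter.2 ⟨hBS hpm, ?_⟩
            have f1 : 0 ≤ p 1 - (t * p 0 + w) := by rw [hres p]; linarith
            have f2 : 0 ≤ p 0 - x₀ := by linarith [hoMB m₂ hm₂M p hpm]
            exact mul_nonneg f1 f2
        have hd1 : Disjoint (M.filter fun p => rsd t p = w) (B.filter fun p => w ≤ rsd t p) :=
          hdMB.mono (filter_subset _ _) (filter_subset _ _)
        have hd2 : Disjoint (A.filter fun p => rsd t p ≤ w)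
            ((M.filter fun p => rsd t p = w) ∪ (B.filter fun p => w ≤ rsd t p)) :=
          Finset.disjoint_union_right.2
            ⟨hdAM.mono (filter_subset _ _) (filter_subset _ _),
             hdAB.mono (filter_subset _ _) (filter_subset _ _)⟩
        calc k ≤ (A.filter fun p => rsd t p ≤ w).card
              + ((M.filter fun p => rsd t p = w).card
              + (B.filter fun p => w ≤ rsd t p).card) := by
                linarith [hMsplit1, hMeq1, uA, dB]
          _ = _ := by rw [← card_union_of_disjoint hd1, ← card_union_of_disjoint hd2]
          _ ≤ _ := card_le_card hsub
  · -- wedge⁻ : res * (x - x₀) ≤ 0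
    by_cases hca : ∀ m' ∈ M, x₀ ≤ m' 0
    · have hsub : (M.filter fun p => rsd t p ≤ w) ∪ (B.filter fun p => rsd t p ≤ w)
          ⊆ S.filter fun p => (p 1 - (t * p 0 + w)) * (p 0 - x₀) ≤ 0 := by
        intro p hp
        rcases mem_union.1 hp with hp | hp <;> obtain ⟨hpm, hpr⟩ := mem_filter.1 hp
        · refine mem_filter.2 ⟨hMS hpm, ?_⟩
          have f1 : p 1 - (t * p 0 + w) ≤ 0 := by rw [hres p]; linarith
          have f2 : 0 ≤ p 0 - x₀ := by linarith [hca p hpm]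
          exact mulneg1 _ _ f1 f2
        · refine mem_filter.2 ⟨hBS hpm, ?_⟩
          have f1 : p 1 - (t * p 0 + w) ≤ 0 := by rw [hres p]; linarith
          have f2 : 0 ≤ p 0 - x₀ := by linarith [hca mlo hmlo, hoMB mlo hmlo p hpm]
          exact mulneg1 _ _ f1 f2
      calc k ≤ (M.filter fun p => rsd t p ≤ w).card
            + (B.filter fun p => rsd t p ≤ w).card := by linarith [hMsplit1, uB]
        _ = ((M.filter fun p => rsd t p ≤ w) ∪ (B.filter fun p => rsd t p ≤ w)).card :=
            (card_union_of_disjoint (hdMB.mono (filter_subset _ _) (filter_subset _ _))).symm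
        _ ≤ _ := card_le_card hsub
    · by_cases hcb : ∀ m' ∈ M, m' 0 ≤ x₀
      · have hsub : (A.filter fun p => w ≤ rsd t p) ∪ (M.filter fun p => w ≤ rsd t p)
            ⊆ S.filter fun p => (p 1 - (t * p 0 + w)) * (p 0 - x₀) ≤ 0 := by
          intro p hp
          rcases mem_union.1 hp with hp | hp <;> obtain ⟨hpm, hpr⟩ := mem_filter.1 hp
          · refine mem_filter.2 ⟨hAS hpm, ?_⟩
            have f1 : 0 ≤ p 1 - (t * p 0 + w) := by rw [hres p]; linarith
            have f2 : p 0 - x₀ ≤ 0 := by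
              linarith [hoAM p hpm mlo hmlo, hcb mlo hmlo]
            exact mulneg2 _ _ f1 f2
          · refine mem_filter.2 ⟨hMS hpm, ?_⟩
            have f1 : 0 ≤ p 1 - (t * p 0 + w) := by rw [hres p]; linarith
            have f2 : p 0 - x₀ ≤ 0 := by linarith [hcb p hpm]
            exact mulneg2 _ _ f1 f2
        calc k ≤ (A.filter fun p => w ≤ rsd t p).card
              + (M.filter fun p => w ≤ rsd t p).card := by linarith [hMsplit2, dA]
          _ = ((A.filter fun p => w ≤ rsd t p) ∪ (M.filter fun p => w ≤ rsd t p)).card :=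
              (card_union_of_disjoint (hdAM.mono (filter_subset _ _) (filter_subset _ _))).symm
          _ ≤ _ := card_le_card hsub
      · push_neg at hca hcb
        obtain ⟨m₁, hm₁M, hm₁⟩ := hca
        obtain ⟨m₂, hm₂M, hm₂⟩ := hcb
        have hsub : (A.filter fun p => w ≤ rsd t p) ∪ ((M.filter fun p => rsd t p = w)
            ∪ (B.filter fun p => rsd t p ≤ w))
            ⊆ S.filter fun p => (p 1 - (t * p 0 + w)) * (p 0 - x₀) ≤ 0 := by
          intro p hp
          rcases mem_union.1 hp with hp | hp
          · obtain ⟨hpm, hpr⟩ := mem_filter.1 hp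
            refine mem_filter.2 ⟨hAS hpm, ?_⟩
            have f1 : 0 ≤ p 1 - (t * p 0 + w) := by rw [hres p]; linarith
            have f2 : p 0 - x₀ ≤ 0 := by linarith [hoAM p hpm m₁ hm₁M]
            exact mulneg2 _ _ f1 f2
          rcases mem_union.1 hp with hp | hp <;> obtain ⟨hpm, hpr⟩ := mem_filter.1 hp
          · refine mem_filter.2 ⟨hMS hpm, ?_⟩
            have f1 : p 1 - (t * p 0 + w) = 0 := by rw [hres p]; linarith
            rw [f1, zero_mul]
          · refine mem_filter.2 ⟨hBS hpm, ?_⟩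
            have f1 : p 1 - (t * p 0 + w) ≤ 0 := by rw [hres p]; linarith
            have f2 : 0 ≤ p 0 - x₀ := by linarith [hoMB m₂ hm₂M p hpm]
            exact mulneg1 _ _ f1 f2
        have hd1 : Disjoint (M.filter fun p => rsd t p = w) (B.filter fun p => rsd t p ≤ w) :=
          hdMB.mono (filter_subset _ _) (filter_subset _ _)
        have hd2 : Disjoint (A.filter fun p => w ≤ rsd t p)
            ((M.filter fun p => rsd t p = w) ∪ (B.filter fun p => rsd t p ≤ w)) :=
          Finset.disjoint_union_right.2
            ⟨hdAM.mono (filter_subset _ _) (filter_subset _ _),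
             hdAB.mono (filter_subset _ _) (filter_subset _ _)⟩
        calc k ≤ (A.filter fun p => w ≤ rsd t p).card
              + ((M.filter fun p => rsd t p = w).card
              + (B.filter fun p => rsd t p ≤ w).card) := by
                linarith [hMsplit2, hMeq2, dA, uB]
          _ = _ := by rw [← card_union_of_disjoint hd1, ← card_union_of_disjoint hd2]
          _ ≤ _ := card_le_card hsub

end CatlineAux

/-- Catline depth guarantee: for n points in ℝ², no two sharing an x-coordinate,
there is a non-vertical line L (y = a·x + b) such that every closed double wedge
bounded by L and a vertical line x = x₀ (i.e. either of the two regions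
{p : (p₂ - (a p₁ + b))·(p₁ - x₀) ≥ 0} and {p : (p₂ - (a p₁ + b))·(p₁ - x₀) ≤ 0})
contains at least ⌈n/3⌉ points of S. -/
theorem stmt7 (S : Finset (EuclideanSpace ℝ (Fin 2)))
    (hgen : ∀ p ∈ S, ∀ q ∈ S, p ≠ q → p 0 ≠ q 0) :
    ∃ a b : ℝ, ∀ x₀ : ℝ,
      (⌈(S.card : ℚ) / 3⌉ : ℤ) ≤
        Set.ncard {p ∈ (S : Set (EuclideanSpace ℝ (Fin 2))) |
          0 ≤ (p 1 - (a * p 0 + b)) * (p 0 - x₀)} ∧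
      (⌈(S.card : ℚ) / 3⌉ : ℤ) ≤
        Set.ncard {p ∈ (S : Set (EuclideanSpace ℝ (Fin 2))) |
          (p 1 - (a * p 0 + b)) * (p 0 - x₀) ≤ 0} := by
  classical
  rw [ceil_third]
  have hconv : ∀ (a b x₀ : ℝ) (P : Pt → Prop),
      Set.ncard {p ∈ (S : Set Pt) | P p} = (S.filter fun p => P p).card := by
    intro a b x₀ P
    rw [show {p ∈ (S : Set Pt) | P p} = ↑(S.filter fun p => P p) from
      (Finset.coe_filter _ _).symm, Set.ncard_coe_finset]
  by_cases hS : S.card ≤ 3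
  · by_cases h0 : S.card = 0
    · refine ⟨0, 0, fun x₀ => ⟨?_, ?_⟩⟩ <;>
      · rw [h0]
        norm_num
    · obtain ⟨p₀, hp₀⟩ : S.Nonempty := Finset.card_pos.1 (by omega)
      refine ⟨0, p₀ 1, fun x₀ => ⟨?_, ?_⟩⟩
      · rw [hconv 0 (p₀ 1) x₀]
        have hk1 : ((S.card + 2) / 3 : ℕ) = 1 := by omega
        rw [hk1]
        have : p₀ ∈ S.filter fun p => 0 ≤ (p 1 - (0 * p 0 + p₀ 1)) * (p 0 - x₀) := by
          refine mem_filter.2 ⟨hp₀, ?_⟩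
          have : p₀ 1 - (0 * p₀ 0 + p₀ 1) = 0 := by ring
          rw [this, zero_mul]
        have hcard := Finset.card_pos.2 ⟨p₀, this⟩
        exact Nat.cast_le.mpr hcard
      · rw [hconv 0 (p₀ 1) x₀]
        have hk1 : ((S.card + 2) / 3 : ℕ) = 1 := by omega
        rw [hk1]
        have : p₀ ∈ S.filter fun p => (p 1 - (0 * p 0 + p₀ 1)) * (p 0 - x₀) ≤ 0 := by
          refine mem_filter.2 ⟨hp₀, ?_⟩
          have : p₀ 1 - (0 * p₀ 0 + p₀ 1) = 0 := by ring
          rw [this, zero_mul]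
        have hcard := Finset.card_pos.2 ⟨p₀, this⟩
        exact Nat.cast_le.mpr hcard
  · obtain ⟨a, b, hab⟩ := exists_good_line S hgen (by omega)
    refine ⟨a, b, fun x₀ => ?_⟩
    obtain ⟨h1, h2⟩ := hab x₀
    constructor
    · rw [hconv a b x₀]
      exact Nat.cast_le.mpr h1
    · rw [hconv a b x₀]
      exact Nat.cast_le.mpr h2
end

section
/- For finite sets, the minimum coverage number computed recursively on a binary decomposition tree is correct: if each leaf cell C has coverage count equal to the number of sets directly assigned to ancestors of C (including C itself), then the minimum over leaves of these counts equals the minimum over points of the number of sets covering that point, provided each set in the family is exactly the disjoint union of the cells it is assigned to. -/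
/-- Correctness of the recursive coverage-number computation on a decomposition tree.
The space X is partitioned into nonempty leaf cells (indexed by ι, with tree nodes
indexed by N); `anc l` is the set of ancestor-or-self nodes of leaf l; the region of a
node n is the union of the cells of leaves having n as ancestor.  Each set `F i` of a
finite family is assigned to nodes `asg i`, and equals the disjoint union of the
regions of its assigned nodes.  Then the minimum over leaves of the coverage count
(number of sets assigned to some ancestor-or-self node of the leaf) equals the
minimum over points of X of the number of sets of the family covering the point. -/
theorem stmt15 {X N ι : Type*} [Fintype N] [DecidableEq N] [Fintype ι] [Nonempty ι] (m : ℕ)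
    (cells : ι → Set X) (anc : ι → Finset N)
    (F : Fin m → Set X) (asg : Fin m → Finset N)
    (hne : ∀ l, (cells l).Nonempty)
    (hdisj : Pairwise (Function.onFun Disjoint cells))
    (hcover : ⋃ l, cells l = Set.univ)
    (hrep : ∀ i, F i = ⋃ n ∈ asg i, ⋃ l ∈ {l | n ∈ anc l}, cells l)
    (hrepdisj : ∀ i, ((asg i : Set N)).PairwiseDisjoint
      (fun n => ⋃ l ∈ {l | n ∈ anc l}, cells l)) :
    sInf {c : ℕ | ∃ l : ι, c = Set.ncard {i : Fin m | ((asg i) ∩ (anc l)).Nonempty}} =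
      sInf {c : ℕ | ∃ x : X, c = Set.ncard {i : Fin m | x ∈ F i}} := by
  have key : ∀ (l : ι) (x : X), x ∈ cells l →
      {i : Fin m | x ∈ F i} = {i : Fin m | ((asg i) ∩ (anc l)).Nonempty} := by
    intro l x hx
    ext i
    simp only [Set.mem_setOf_eq, hrep i, Set.mem_iUnion, Finset.Nonempty,
      Finset.mem_inter]
    constructor
    · rintro ⟨n, hn, l', hl', hx'⟩
      have : l' = l := by
        by_contra h
        exact (hdisj h).le_bot ⟨hx', hx⟩ 
      subst this
      exact ⟨n, hn, hl'⟩
    · rintro ⟨n, hn, hn'⟩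
      exact ⟨n, hn, l, hn', hx⟩
  congr 1
  ext c
  simp only [Set.mem_setOf_eq]
  constructor
  · rintro ⟨l, rfl⟩
    obtain ⟨x, hx⟩ := hne l
    exact ⟨x, by rw [key l x hx]⟩
  · rintro ⟨x, rfl⟩
    have : x ∈ ⋃ l, cells l := hcover ▸ Set.mem_univ x
    obtain ⟨l, hl⟩ := Set.mem_iUnion.mp this
    exact ⟨l, by rw [key l x hl]⟩
end

section
/- The regression depth of a non-vertical hyperplane H with respect to a finite point set S in R^d equals the minimum, over all hyperplanes V containing the vertical direction e_d, of the minimum number of points of S contained in either of the two closed double wedges bounded by H and V. -/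
open RealInnerProductSpace


lemma ivt_zero (f : ℝ → ℝ) (hf : Continuous f) (h : f 0 * f 1 ≤ 0) :
    ∃ t ∈ Set.Icc (0:ℝ) 1, f t = 0 := by
  have h0 : (0:ℝ) ∈ Set.uIcc (f 0) (f 1) := by
    rcases mul_nonpos_iff.mp h with ⟨h1, h2⟩ | ⟨h1, h2⟩
    · exact Set.mem_uIcc.mpr (Or.inr ⟨h2, h1⟩)
    · exact Set.mem_uIcc.mpr (Or.inl ⟨h1, h2⟩)
  obtain ⟨t, ht, h2⟩ := intermediate_value_uIcc hf.continuousOn h0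
  exact ⟨t, by simpa [Set.uIcc_of_le zero_le_one] using ht, h2⟩

lemma seg_iff (a b : ℝ) :
    (∃ t ∈ Set.Icc (0:ℝ) 1, (1-t)*a + t*b = 0) ↔ a*b ≤ 0 := by
  constructor
  · rintro ⟨t, ⟨ht0, ht1⟩, heq⟩
    have e : a*b = -((1-t)*(a*a) + t*(b*b)) := by linear_combination (a+b)*heq
    have p1 : 0 ≤ (1-t)*(a*a) := mul_nonneg (by linarith) (mul_self_nonneg a)
    have p2 : 0 ≤ t*(b*b) := mul_nonneg ht0 (mul_self_nonneg b)
    linarith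
  · intro h
    obtain ⟨t, ht, h2⟩ := ivt_zero (fun t => (1-t)*a + t*b) (by continuity) (by simpa using h)
    exact ⟨t, ht, h2⟩
lemma aux_motion (d : ℕ) (hd : 0 < d) (S : Finset (EuclideanSpace ℝ (Fin d)))
    (w v : EuclideanSpace ℝ (Fin d)) (c c' : ℝ)
    (hw : w ⟨d - 1, by omega⟩ ≠ 0) (hv : v ≠ 0) (hvl : v ⟨d - 1, by omega⟩ = 0) :
    ∃ (W : ℝ → EuclideanSpace ℝ (Fin d)) (C : ℝ → ℝ),
      Continuous W ∧ Continuous C ∧ (∀ t ∈ Set.Icc (0:ℝ) 1, W t ≠ 0) ∧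
      W 0 = w ∧ C 0 = c ∧ W 1 ⟨d - 1, by omega⟩ = 0 ∧
      {s ∈ (S : Set (EuclideanSpace ℝ (Fin d))) | ∃ t ∈ Set.Icc (0:ℝ) 1, ⟪s, W t⟫ = C t}
        = {s ∈ (S : Set (EuclideanSpace ℝ (Fin d))) | (⟪s, w⟫ - c) * (⟪s, v⟫ - c') ≤ 0} := by
  refine ⟨fun t => (1-t) • w + t • v, fun t => (1-t)*c + t*c', ?_, ?_, ?_, ?_, ?_, ?_, ?_⟩
  · continuity
  · continuity
  · rintro t ⟨ht0, ht1⟩ h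
    by_cases h1 : t = 1
    · subst h1
      simp only [sub_self, zero_smul, one_smul, zero_add] at h
      exact hv h
    · have h' := congrArg (fun x : EuclideanSpace ℝ (Fin d) => x ⟨d - 1, by omega⟩) h
      simp only [PiLp.add_apply, PiLp.smul_apply, smul_eq_mul, hvl, mul_zero, add_zero,
        PiLp.zero_apply] at h'
      rcases mul_eq_zero.mp h' with h2 | h2
      · exact h1 (by linarith [sub_eq_zero.mp h2])
      · exact hw h2
  · simp
  · simp
  · simp [hvl]
  · ext s
    simp only [Set.mem_setOf_eq]
    refine and_congr_right fun _ => ?_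
    have hre : ∀ t : ℝ, (⟪s, (1-t) • w + t • v⟫ = (1-t)*c + t*c') ↔
        ((1-t)*(⟪s, w⟫ - c) + t*(⟪s, v⟫ - c') = 0) := by
      intro t
      rw [inner_add_right, real_inner_smul_right, real_inner_smul_right]
      constructor <;> intro h <;> linarith [h]
    constructor
    · rintro ⟨t, ht, h⟩
      exact (seg_iff _ _).mp ⟨t, ht, (hre t).mp h⟩
    · intro h
      obtain ⟨t, ht, h2⟩ := (seg_iff _ _).mpr h
      exact ⟨t, ht, (hre t).mpr h2⟩

/-- The regression depth of a non-vertical hyperplane H = {x : ⟪x,w⟫ = c} with respect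
to a finite point set S ⊆ ℝ^d — the minimum number of points of S crossed by any
continuous motion (W t, C t) of the hyperplane taking it to a vertical hyperplane
(one whose normal is orthogonal to the last coordinate direction e_d) — equals the
minimum, over all vertical hyperplanes V = {x : ⟪x,v⟫ = c'}, of the minimum number
of points of S in either of the two closed double wedges
{s : (⟪s,w⟫-c)(⟪s,v⟫-c') ≥ 0} and {s : (⟪s,w⟫-c)(⟪s,v⟫-c') ≤ 0} bounded by H and V. -/
theorem stmt18 (d : ℕ) (hd : 1 ≤ d) (S : Finset (EuclideanSpace ℝ (Fin d)))
    (w : EuclideanSpace ℝ (Fin d)) (c : ℝ) (hw : w ⟨d - 1, by omega⟩ ≠ 0) :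
    sInf {m : ℕ | ∃ (W : ℝ → EuclideanSpace ℝ (Fin d)) (C : ℝ → ℝ),
        Continuous W ∧ Continuous C ∧ (∀ t ∈ Set.Icc (0:ℝ) 1, W t ≠ 0) ∧
        W 0 = w ∧ C 0 = c ∧ W 1 ⟨d - 1, by omega⟩ = 0 ∧
        m = Set.ncard {s ∈ (S : Set (EuclideanSpace ℝ (Fin d))) |
          ∃ t ∈ Set.Icc (0:ℝ) 1, ⟪s, W t⟫ = C t}} =
    sInf {m : ℕ | ∃ (v : EuclideanSpace ℝ (Fin d)) (c' : ℝ), v ≠ 0 ∧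
        v ⟨d - 1, by omega⟩ = 0 ∧
        (m = Set.ncard {s ∈ (S : Set (EuclideanSpace ℝ (Fin d))) |
            0 ≤ (⟪s, w⟫ - c) * (⟪s, v⟫ - c')} ∨
         m = Set.ncard {s ∈ (S : Set (EuclideanSpace ℝ (Fin d))) |
            (⟪s, w⟫ - c) * (⟪s, v⟫ - c') ≤ 0})} := by
  set A := {m : ℕ | ∃ (W : ℝ → EuclideanSpace ℝ (Fin d)) (C : ℝ → ℝ),
        Continuous W ∧ Continuous C ∧ (∀ t ∈ Set.Icc (0:ℝ) 1, W t ≠ 0) ∧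
        W 0 = w ∧ C 0 = c ∧ W 1 ⟨d - 1, by omega⟩ = 0 ∧
        m = Set.ncard {s ∈ (S : Set (EuclideanSpace ℝ (Fin d))) |
          ∃ t ∈ Set.Icc (0:ℝ) 1, ⟪s, W t⟫ = C t}} with hA
  set B := {m : ℕ | ∃ (v : EuclideanSpace ℝ (Fin d)) (c' : ℝ), v ≠ 0 ∧
        v ⟨d - 1, by omega⟩ = 0 ∧
        (m = Set.ncard {s ∈ (S : Set (EuclideanSpace ℝ (Fin d))) |
            0 ≤ (⟪s, w⟫ - c) * (⟪s, v⟫ - c')} ∨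
         m = Set.ncard {s ∈ (S : Set (EuclideanSpace ℝ (Fin d))) |
            (⟪s, w⟫ - c) * (⟪s, v⟫ - c') ≤ 0})} with hB
  rcases Nat.lt_or_ge d 2 with hd1 | hd2
  · -- d = 1 : both sets empty
    have hAe : A = ∅ := by
      rw [hA, Set.eq_empty_iff_forall_notMem]
      rintro m ⟨W, C, hWc, hCc, hWne, hW0, hC0, hW1, hm⟩
      refine hWne 1 ⟨zero_le_one, le_refl 1⟩ ?_
      ext i
      have hi : i = ⟨d - 1, by omega⟩ := Fin.ext (by omega)
      rw [hi]; exact hW1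
    have hBe : B = ∅ := by
      rw [hB, Set.eq_empty_iff_forall_notMem]
      rintro m ⟨v, c', hv, hvl, _⟩
      refine hv ?_
      ext i
      have hi : i = ⟨d - 1, by omega⟩ := Fin.ext (by omega)
      rw [hi]; exact hvl
    rw [hAe, hBe]
  · -- d ≥ 2
    have hsub : B ⊆ A := by
      rintro m ⟨v, c', hv, hvl, hcase | hcase⟩
      · -- ≥ 0 wedge: use -v, -c'
        obtain ⟨W, C, h1, h2, h3, h4, h5, h6, h7⟩ :=
          aux_motion d hd S w (-v) c (-c') hw (neg_ne_zero.mpr hv) (by simp [hvl])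
        refine ⟨W, C, h1, h2, h3, h4, h5, h6, ?_⟩
        rw [h7, hcase]
        congr 1
        ext s
        simp only [Set.mem_setOf_eq, inner_neg_right]
        constructor <;> intro ⟨hs, h⟩ <;> exact ⟨hs, by nlinarith⟩
      · obtain ⟨W, C, h1, h2, h3, h4, h5, h6, h7⟩ :=
          aux_motion d hd S w v c c' hw hv hvl
        exact ⟨W, C, h1, h2, h3, h4, h5, h6, by rw [h7, hcase]⟩
    have hBne : B.Nonempty := by
      refine ⟨_, ⟨EuclideanSpace.single (⟨0, by omega⟩ : Fin d) (1:ℝ), 0, ?_, ?_, Or.inr rfl⟩⟩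
      · intro h
        have := congrArg (fun x : EuclideanSpace ℝ (Fin d) => x ⟨0, by omega⟩) h
        simp [EuclideanSpace.single_apply] at this
      · rw [EuclideanSpace.single_apply]
        simp only [ite_eq_right_iff]
        intro h
        exact absurd (Fin.mk.injEq .. ▸ h) (by omega)
    have hAne : A.Nonempty := hBne.mono hsub
    apply le_antisymm
    · exact Nat.sInf_le (hsub (Nat.sInf_mem hBne))
    · obtain ⟨W, C, hWc, hCc, hWne, hW0, hC0, hW1, hm⟩ := Nat.sInf_mem hAne
      have hmemB : Set.ncard {s ∈ (S : Set (EuclideanSpace ℝ (Fin d))) |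
          (⟪s, w⟫ - c) * (⟪s, W 1⟫ - C 1) ≤ 0} ∈ B :=
        ⟨W 1, C 1, hWne 1 ⟨zero_le_one, le_refl 1⟩, hW1, Or.inr rfl⟩
      refine le_trans (Nat.sInf_le hmemB) ?_
      rw [hm]
      apply Set.ncard_le_ncard
      · rintro s ⟨hs, hprod⟩
        refine ⟨hs, ?_⟩
        have hf : Continuous fun t => ⟪s, W t⟫ - C t :=
          (Continuous.inner continuous_const hWc).sub hCc
        obtain ⟨t, ht, h0⟩ := ivt_zero _ hf (by simpa [hW0, hC0] using hprod)
        exact ⟨t, ht, by linarith [h0]⟩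
      · exact S.finite_toSet.subset fun x hx => hx.1
end
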